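/- In the (s,R)-disperser widget, if a colouring sequence colours the receive vertex r_s (on the master component) yellow, then the sequence can be extended to colour all the send vertices t_r, r ∈ R, on the slave components yellow, even with zero tokens assigned to all disperser components. -/
import Mathlib


/-! Formal framework: communication graphs and the red/yellow/green colouring game
(Brodsky–Pedersen–Wagner, "On the Complexity of Buffer Allocation in Message Passing Systems"),
with receive-side token pools. -/

inductive Colour : Type
  | red | yellow | green
deriving DecidableEq

/-- A communication graph: vertices are partitioned into start/send/receive/end vertices,
`pred u v` means `u` is the component predecessor of `v` (a process arc `u → v`),
`matched u v` is a communication arc from send `u` to its matching receive `v`,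
`comp v` is the index of the process component of `v`, and `pos v` is the position
of `v` within its component chain. -/
structure CommGraph (V : Type) where
  isStart : V → Prop
  isSend : V → Prop
  isRecv : V → Prop
  isEnd : V → Prop
  pred : V → V → Prop
  matched : V → V → Prop
  comp : V → ℕ
  pos : V → ℕ

namespace CommGraph

variable {V : Type}

/-- An arc of the communication graph (process arc or communication arc). -/
def GArc (G : CommGraph V) (u v : V) : Prop := G.pred u v ∨ G.matched u v

/-- Well-formedness of a communication graph: the vertex kinds partition `V`,
components are chains (unique predecessors, positions increase along process arcs),
communication arcs go from sends to receives in different components and form a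
partial matching, and the graph is acyclic (arcs admit no infinite descent). -/
structure WF (G : CommGraph V) : Prop where
  kinds : ∀ v, G.isStart v ∨ G.isSend v ∨ G.isRecv v ∨ G.isEnd v
  start_not_send : ∀ v, G.isStart v → ¬ G.isSend v
  start_not_recv : ∀ v, G.isStart v → ¬ G.isRecv v
  start_not_end : ∀ v, G.isStart v → ¬ G.isEnd v
  send_not_recv : ∀ v, G.isSend v → ¬ G.isRecv v
  send_not_end : ∀ v, G.isSend v → ¬ G.isEnd v
  recv_not_end : ∀ v, G.isRecv v → ¬ G.isEnd v
  pred_unique : ∀ {u u' v}, G.pred u v → G.pred u' v → u = u'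
  pred_comp : ∀ {u v}, G.pred u v → G.comp u = G.comp v
  pred_pos : ∀ {u v}, G.pred u v → G.pos v = G.pos u + 1
  start_no_pred : ∀ {u v}, G.pred u v → ¬ G.isStart v
  has_pred : ∀ v, ¬ G.isStart v → ∃ u, G.pred u v
  matched_send : ∀ {u v}, G.matched u v → G.isSend u
  matched_recv : ∀ {u v}, G.matched u v → G.isRecv v
  matched_comp : ∀ {u v}, G.matched u v → G.comp u ≠ G.comp v
  matched_unique_left : ∀ {u u' v}, G.matched u v → G.matched u' v → u = u'
  matched_unique_right : ∀ {u v v'}, G.matched u v → G.matched u v' → v = v'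
  send_has_match : ∀ v, G.isSend v → ∃ w, G.matched v w
  recv_has_match : ∀ v, G.isRecv v → ∃ w, G.matched w v
  dag : WellFounded fun u v => G.GArc u v

end CommGraph

/-- A state of the colouring game: the colouring, which receive vertices currently
hold a token on their incident communication arc, and the number of available
tokens in each (per-process, receive-side) pool. -/
structure St (V : Type) where
  col : V → Colour
  tok : V → Bool
  pool : ℕ → ℕ

/-- The names of the colouring rules. -/
inductive Rule : Type
  | sendYel | recvYel | recvYelTok | sendGrn | recvGrn | endYel | endGrn
deriving DecidableEq

variable {V : Type}

/-- One move of the colouring game (receive-side buffering: the token used by the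
buffered-receive rule `recvYelTok` comes from the pool of the receiving component,
and is returned when the receive turns green). -/
inductive Step [DecidableEq V] (G : CommGraph V) : Rule → St V → St V → Prop
  | sendYel {s : St V} {v u : V} :
      G.isSend v → s.col v = .red → G.pred u v → s.col u = .green →
      Step G .sendYel s ⟨Function.update s.col v .yellow, s.tok, s.pool⟩
  | recvYel {s : St V} {v u w : V} :
      G.isRecv v → s.col v = .red → G.matched w v → s.col w = .yellow →
      G.pred u v → s.col u = .green →
      Step G .recvYel s ⟨Function.update s.col v .yellow, s.tok, s.pool⟩
  | recvYelTok {s : St V} {v w : V} :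
      G.isRecv v → s.col v = .red → G.matched w v → s.col w = .yellow →
      0 < s.pool (G.comp v) →
      Step G .recvYelTok s ⟨Function.update s.col v .yellow,
        Function.update s.tok v true,
        Function.update s.pool (G.comp v) (s.pool (G.comp v) - 1)⟩
  | sendGrn {s : St V} {v r : V} :
      G.isSend v → s.col v = .yellow → G.matched v r → s.col r = .yellow →
      Step G .sendGrn s ⟨Function.update s.col v .green, s.tok, s.pool⟩
  | recvGrn {s : St V} {v u w : V} :
      G.isRecv v → s.col v = .yellow → G.pred u v → s.col u = .green →
      G.matched w v → s.col w = .green →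
      Step G .recvGrn s ⟨Function.update s.col v .green,
        Function.update s.tok v false,
        if s.tok v then
          Function.update s.pool (G.comp v) (s.pool (G.comp v) + 1)
        else s.pool⟩
  | endYel {s : St V} {v u : V} :
      G.isEnd v → s.col v = .red → G.pred u v → s.col u = .green →
      Step G .endYel s ⟨Function.update s.col v .yellow, s.tok, s.pool⟩
  | endGrn {s : St V} {v : V} :
      G.isEnd v → s.col v = .yellow →
      Step G .endGrn s ⟨Function.update s.col v .green, s.tok, s.pool⟩

/-- `IsSeq G s l` : the list `l` of (rule, state) pairs is a valid colouring sequence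
starting from state `s`. -/
def IsSeq [DecidableEq V] (G : CommGraph V) : St V → List (Rule × St V) → Prop
  | _, [] => True
  | s, p :: l => Step G p.1 s p.2 ∧ IsSeq G p.2 l

/-- The list of states visited by a colouring sequence. -/
def states (s0 : St V) (l : List (Rule × St V)) : List (St V) :=
  s0 :: l.map Prod.snd

/-- The final state of a colouring sequence. -/
def finalSt (s0 : St V) (l : List (Rule × St V)) : St V :=
  (states s0 l).getLast (by simp [states])

open Classical in
/-- The initial state: start vertices green, all others red, no tokens placed,
token pools given by the token assignment `B` (pool of component `i` holds `B i`). -/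
noncomputable def init (G : CommGraph V) (B : ℕ → ℕ) : St V :=
  ⟨fun v => if G.isStart v then Colour.green else Colour.red, fun _ => false, B⟩

/-- A state from which no colouring rule applies. -/
def MaximalFrom [DecidableEq V] (G : CommGraph V) (s : St V) : Prop :=
  ∀ ρ t, ¬ Step G ρ s t

/-- A state is complete when every vertex is green. -/
def Completes (s : St V) : Prop := ∀ v, s.col v = Colour.green

/-- A deadlocking colouring sequence from `s0`: a maximal sequence whose final
colouring has a non-green vertex. -/
def Deadlocks [DecidableEq V] (G : CommGraph V) (s0 : St V) (l : List (Rule × St V)) : Prop :=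
  IsSeq G s0 l ∧ MaximalFrom G (finalSt s0 l) ∧ ¬ Completes (finalSt s0 l)

/-- The system is safe (deadlock free) under token assignment `B`:
every maximal colouring sequence completes. -/
def DeadlockFree [DecidableEq V] (G : CommGraph V) (B : ℕ → ℕ) : Prop :=
  ∀ l, IsSeq G (init G B) l → MaximalFrom G (finalSt (init G B) l) →
    Completes (finalSt (init G B) l)

/-- A state blocks: some yellow send has a matching red receive to which the
buffered-receive rule cannot be applied (no token available). -/
def Blocked (G : CommGraph V) (s : St V) : Prop :=
  ∃ v r, G.matched v r ∧ s.col v = Colour.yellow ∧ s.col r = Colour.red ∧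
    s.pool (G.comp r) = 0

/-- The graph is block free under token assignment `B`: no colouring sequence blocks. -/
def BlockFree [DecidableEq V] (G : CommGraph V) (B : ℕ → ℕ) : Prop :=
  ∀ l, IsSeq G (init G B) l → ¬ Blocked G (finalSt (init G B) l)


set_option linter.unusedSectionVars false
section Helpers
variable {V : Type} [DecidableEq V] {G : CommGraph V}

private lemma upd_aux {f : V → Colour} {v : V} {c0 c1 : Colour} (x : V)
    (h : f v = c0) (h0 : c0 ≠ Colour.green) (h1 : c1 ≠ Colour.red) :
    Function.update f v c1 x = f x ∨ (f x ≠ Colour.green ∧ Function.update f v c1 x ≠ Colour.red) := by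
  by_cases hx : x = v
  · subst hx
    exact Or.inr ⟨h ▸ h0, by simpa using h1⟩
  · exact Or.inl (Function.update_of_ne hx _ _)

lemma step_col {ρ : Rule} {s t : St V} (h : Step G ρ s t) (x : V) :
    t.col x = s.col x ∨ (s.col x ≠ Colour.green ∧ t.col x ≠ Colour.red) := by
  cases h with
  | @sendYel s v u h1 h2 h3 h4 => exact upd_aux x h2 (by decide) (by decide)
  | @recvYel s v u w h1 h2 h3 h4 h5 h6 => exact upd_aux x h2 (by decide) (by decide)
  | @recvYelTok s v w h1 h2 h3 h4 h5 => exact upd_aux x h2 (by decide) (by decide)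
  | @sendGrn s v r h1 h2 h3 h4 => exact upd_aux x h2 (by decide) (by decide)
  | @recvGrn s v u w h1 h2 h3 h4 h5 h6 => exact upd_aux x h2 (by decide) (by decide)
  | @endYel s v u h1 h2 h3 h4 => exact upd_aux x h2 (by decide) (by decide)
  | @endGrn s v h1 h2 => exact upd_aux x h2 (by decide) (by decide)

lemma step_green_mono {ρ : Rule} {s t : St V} (h : Step G ρ s t) (x : V)
    (hx : s.col x = Colour.green) : t.col x = Colour.green := by
  rcases step_col h x with h' | ⟨h', _⟩
  · rw [h', hx]
  · exact absurd hx h'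

lemma step_red_mono {ρ : Rule} {s t : St V} (h : Step G ρ s t) (x : V)
    (hx : t.col x = Colour.red) : s.col x = Colour.red := by
  rcases step_col h x with h' | ⟨_, h'⟩
  · rw [← h', hx]
  · exact absurd hx h'

lemma step_new {ρ : Rule} {s t : St V} (h : Step G ρ s t) (x : V)
    (hr : s.col x = Colour.red) (hr' : t.col x ≠ Colour.red) :
    (G.isSend x ∧ ∃ u, G.pred u x ∧ s.col u = Colour.green) ∨
    (G.isRecv x ∧ ∃ w, G.matched w x ∧ s.col w = Colour.yellow) ∨ G.isEnd x := by
  cases h with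
  | @sendYel s v u h1 h2 h3 h4 =>
      have hx : x = v := by
        by_contra hxv
        exact hr' ((Function.update_of_ne hxv _ _).trans hr)
      subst hx; exact Or.inl ⟨h1, u, h3, h4⟩
  | @recvYel s v u w h1 h2 h3 h4 h5 h6 =>
      have hx : x = v := by
        by_contra hxv
        exact hr' ((Function.update_of_ne hxv _ _).trans hr)
      subst hx; exact Or.inr (Or.inl ⟨h1, w, h3, h4⟩)
  | @recvYelTok s v w h1 h2 h3 h4 h5 =>
      have hx : x = v := by
        by_contra hxv
        exact hr' ((Function.update_of_ne hxv _ _).trans hr)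
      subst hx; exact Or.inr (Or.inl ⟨h1, w, h3, h4⟩)
  | @sendGrn s v r h1 h2 h3 h4 =>
      have hx : x = v := by
        by_contra hxv
        exact hr' ((Function.update_of_ne hxv _ _).trans hr)
      subst hx; rw [hr] at h2; cases h2
  | @recvGrn s v u w h1 h2 h3 h4 h5 h6 =>
      have hx : x = v := by
        by_contra hxv
        exact hr' ((Function.update_of_ne hxv _ _).trans hr)
      subst hx; rw [hr] at h2; cases h2
  | @endYel s v u h1 h2 h3 h4 =>
      have hx : x = v := by
        by_contra hxv
        exact hr' ((Function.update_of_ne hxv _ _).trans hr)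
      subst hx; exact Or.inr (Or.inr h1)
  | @endGrn s v h1 h2 =>
      have hx : x = v := by
        by_contra hxv
        exact hr' ((Function.update_of_ne hxv _ _).trans hr)
      subst hx; rw [hr] at h2; cases h2

lemma finalSt_nil (s : St V) : finalSt s [] = s := rfl

lemma finalSt_cons (s : St V) (p : Rule × St V) (l : List (Rule × St V)) :
    finalSt s (p :: l) = finalSt p.2 l := by
  simp only [finalSt, states, List.map_cons]
  exact List.getLast_cons _

def Reach (G : CommGraph V) (s t : St V) : Prop :=
  ∃ l, IsSeq G s l ∧ finalSt s l = t

lemma Reach.refl (s : St V) : Reach G s s := ⟨[], trivial, rfl⟩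

lemma Reach.single {ρ : Rule} {s t : St V} (h : Step G ρ s t) : Reach G s t :=
  ⟨[(ρ, t)], ⟨h, trivial⟩, by simp [finalSt, states]⟩

lemma isSeq_append {s : St V} {l1 l2 : List (Rule × St V)}
    (h1 : IsSeq G s l1) (h2 : IsSeq G (finalSt s l1) l2) :
    IsSeq G s (l1 ++ l2) ∧ finalSt s (l1 ++ l2) = finalSt (finalSt s l1) l2 := by
  induction l1 generalizing s with
  | nil => exact ⟨h2, rfl⟩
  | cons p l ih =>
      rw [finalSt_cons] at h2
      obtain ⟨hs, hrest⟩ := h1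
      obtain ⟨a, b⟩ := ih hrest h2
      exact ⟨⟨hs, a⟩, by rw [List.cons_append, finalSt_cons, b, finalSt_cons]⟩

lemma Reach.trans {s t u : St V} (h1 : Reach G s t) (h2 : Reach G t u) : Reach G s u := by
  obtain ⟨l1, hs1, he1⟩ := h1
  obtain ⟨l2, hs2, he2⟩ := h2
  rw [← he1] at hs2 he2
  obtain ⟨a, b⟩ := isSeq_append hs1 hs2
  exact ⟨l1 ++ l2, a, b.trans he2⟩

lemma inv_finalSt {I : St V → Prop} (hstep : ∀ ρ s t, I s → Step G ρ s t → I t) :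
    ∀ {l : List (Rule × St V)} {s : St V}, I s → IsSeq G s l → I (finalSt s l) := by
  intro l
  induction l with
  | nil => intro s h _; exact h
  | cons p l ih =>
      intro s h hseq
      rw [finalSt_cons]
      exact ih (hstep _ _ _ h hseq.1) hseq.2

end Helpers

set_option maxHeartbeats 1000000 in
/-- **Disperser-widget property.** An `(s, R)`-disperser consists of a master
component `start → r_s → s_0 → … → s_{m-1}` (with `r_s` matched to the external
send `sE`) and, for each `k < m`, a slave component `start → q_k → t_k` with
`s_k` matched to `q_k` and `t_k` a send vertex. If a colouring sequence colours
`r_s` yellow, then it can be extended so that every `t_k` is coloured yellow —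
even with zero tokens on all disperser components. -/
theorem disperser_widget {V : Type} [DecidableEq V] [Fintype V]
    (G : CommGraph V) (hwf : G.WF) (B : ℕ → ℕ) (m : ℕ)
    (stM rs sE : V) (sv qv tv stS : ℕ → V)
    (hstM : G.isStart stM) (hpred0 : G.pred stM rs) (hrs : G.isRecv rs)
    (hsE : G.matched sE rs)
    (hm0 : 0 < m → G.pred rs (sv 0))
    (hchain : ∀ k, k + 1 < m → G.pred (sv k) (sv (k + 1)))
    (hslave : ∀ k < m, G.isSend (sv k) ∧ G.matched (sv k) (qv k) ∧
      G.isStart (stS k) ∧ G.pred (stS k) (qv k) ∧ G.isRecv (qv k) ∧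
      G.pred (qv k) (tv k) ∧ G.isSend (tv k))
    (hB : B (G.comp rs) = 0) (hBslave : ∀ k < m, B (G.comp (qv k)) = 0)
    (l : List (Rule × St V)) (hseq : IsSeq G (init G B) l)
    (hyel : (finalSt (init G B) l).col rs = Colour.yellow) :
    ∃ l', IsSeq G (finalSt (init G B) l) l' ∧
      ∀ k < m, (finalSt (finalSt (init G B) l) l').col (tv k) ≠ Colour.red := by
  -- basic facts extracted from hslave
  have hsvS : ∀ k, k < m → G.isSend (sv k) := fun k hk => (hslave k hk).1
  have hmat : ∀ k, k < m → G.matched (sv k) (qv k) := fun k hk => (hslave k hk).2.1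
  have hstS : ∀ k, k < m → G.isStart (stS k) := fun k hk => (hslave k hk).2.2.1
  have hpq : ∀ k, k < m → G.pred (stS k) (qv k) := fun k hk => (hslave k hk).2.2.2.1
  have hqR : ∀ k, k < m → G.isRecv (qv k) := fun k hk => (hslave k hk).2.2.2.2.1
  have hqt : ∀ k, k < m → G.pred (qv k) (tv k) := fun k hk => (hslave k hk).2.2.2.2.2.1
  have htS : ∀ k, k < m → G.isSend (tv k) := fun k hk => (hslave k hk).2.2.2.2.2.2
  have hsEsend : G.isSend sE := hwf.matched_send hsE
  -- kind-based disequalities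
  have neSR : ∀ {a b : V}, G.isSend a → G.isRecv b → a ≠ b :=
    fun {a b} ha hb he => hwf.send_not_recv b (he ▸ ha) hb
  have neStS : ∀ {a b : V}, G.isStart a → G.isSend b → a ≠ b :=
    fun {a b} ha hb he => hwf.start_not_send a ha (he ▸ hb)
  have neStR : ∀ {a b : V}, G.isStart a → G.isRecv b → a ≠ b :=
    fun {a b} ha hb he => hwf.start_not_recv a ha (he ▸ hb)
  -- component / position facts
  have hcompsv : ∀ k, k < m → G.comp (sv k) = G.comp rs := by
    intro k
    induction k with
    | zero => intro hk; exact (hwf.pred_comp (hm0 hk)).symm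
    | succ j ih =>
        intro hk
        rw [← hwf.pred_comp (hchain j hk)]
        exact ih (Nat.lt_of_succ_lt hk)
  have hpossv : ∀ k, k < m → G.pos (sv k) = G.pos rs + (k + 1) := by
    intro k
    induction k with
    | zero => intro hk; rw [hwf.pred_pos (hm0 hk)]
    | succ j ih =>
        intro hk
        rw [hwf.pred_pos (hchain j hk), ih (Nat.lt_of_succ_lt hk)]; omega
  have hsvinj : ∀ j, j < m → ∀ k, k < m → sv j = sv k → j = k := by
    intro j hj k hk he
    have h1 := hpossv j hj
    rw [he, hpossv k hk] at h1
    omega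
  have hqvinj : ∀ j, j < m → ∀ k, k < m → qv j = qv k → j = k := by
    intro j hj k hk he
    exact hsvinj j hj k hk (hwf.matched_unique_left (he ▸ hmat j hj) (hmat k hk))
  have htvinj : ∀ j, j < m → ∀ k, k < m → tv j = tv k → j = k := by
    intro j hj k hk he
    exact hqvinj j hj k hk (hwf.pred_unique (he ▸ hqt j hj) (hqt k hk))
  have hcompqv : ∀ k, k < m → G.comp (qv k) ≠ G.comp rs := by
    intro k hk h
    exact hwf.matched_comp (hmat k hk) ((hcompsv k hk).trans h.symm)
  have hcomptv : ∀ k, k < m → G.comp (tv k) = G.comp (qv k) :=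
    fun k hk => (hwf.pred_comp (hqt k hk)).symm
  have ne_sv_tv : ∀ j, j < m → ∀ k, k < m → sv j ≠ tv k := by
    intro j hj k hk he
    apply hcompqv k hk
    rw [← hcomptv k hk, ← he]
    exact hcompsv j hj
  have ne_rs_qv : ∀ k, k < m → rs ≠ qv k :=
    fun k hk he => hcompqv k hk (congrArg G.comp he).symm
  have ne_sv_sE : ∀ k, k < m → sv k ≠ sE :=
    fun k hk he => hwf.matched_comp hsE (he ▸ hcompsv k hk)
  -- the invariant along the original sequence
  have hInv : (finalSt (init G B) l).col stM = Colour.green ∧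
      (∀ k, k < m → (finalSt (init G B) l).col (stS k) = Colour.green) ∧
      ((finalSt (init G B) l).col sE = Colour.red → (finalSt (init G B) l).col rs = Colour.red) ∧
      ((finalSt (init G B) l).col rs ≠ Colour.green → ∀ k, k < m →
        (finalSt (init G B) l).col (sv k) = Colour.red ∧
        (finalSt (init G B) l).col (qv k) = Colour.red ∧
        (finalSt (init G B) l).col (tv k) = Colour.red) := by
    refine inv_finalSt (I := fun s => s.col stM = Colour.green ∧
      (∀ k, k < m → s.col (stS k) = Colour.green) ∧
      (s.col sE = Colour.red → s.col rs = Colour.red) ∧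
      (s.col rs ≠ Colour.green → ∀ k, k < m →
        s.col (sv k) = Colour.red ∧ s.col (qv k) = Colour.red ∧ s.col (tv k) = Colour.red))
      ?_ ?_ hseq
    · rintro ρ s t ⟨h1, h2, h3, h4⟩ hst
      refine ⟨step_green_mono hst _ h1, fun k hk => step_green_mono hst _ (h2 k hk), ?_, ?_⟩
      · intro hsEt
        have hsEs := step_red_mono hst _ hsEt
        have hrss := h3 hsEs
        by_contra hne
        rcases step_new hst rs hrss hne with ⟨hsend, _⟩ | ⟨_, w, hw, hwcol⟩ | hend
        · exact hwf.send_not_recv rs hsend hrs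
        · rw [hwf.matched_unique_left hw hsE, hsEs] at hwcol; cases hwcol
        · exact hwf.recv_not_end rs hrs hend
      · intro hrsne k hk
        have hrs0 : s.col rs ≠ Colour.green := fun h => hrsne (step_green_mono hst _ h)
        have h4' := h4 hrs0
        obtain ⟨hsvr, hqvr, htvr⟩ := h4' k hk
        refine ⟨?_, ?_, ?_⟩
        · by_contra hne
          rcases step_new hst _ hsvr hne with ⟨_, u, hu, hucol⟩ | ⟨hrecv, _⟩ | hend
          · cases k with
            | zero => rw [hwf.pred_unique hu (hm0 hk)] at hucol; exact hrs0 hucol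
            | succ j =>
                rw [hwf.pred_unique hu (hchain j hk),
                  (h4' j (Nat.lt_of_succ_lt hk)).1] at hucol
                cases hucol
          · exact hwf.send_not_recv _ (hsvS k hk) hrecv
          · exact hwf.send_not_end _ (hsvS k hk) hend
        · by_contra hne
          rcases step_new hst _ hqvr hne with ⟨hsend, _⟩ | ⟨_, w, hw, hwcol⟩ | hend
          · exact hwf.send_not_recv _ hsend (hqR k hk)
          · rw [hwf.matched_unique_left hw (hmat k hk), hsvr] at hwcol; cases hwcol
          · exact hwf.recv_not_end _ (hqR k hk) hend
        · by_contra hne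
          rcases step_new hst _ htvr hne with ⟨_, u, hu, hucol⟩ | ⟨hrecv, _⟩ | hend
          · rw [hwf.pred_unique hu (hqt k hk), hqvr] at hucol; cases hucol
          · exact hwf.send_not_recv _ (htS k hk) hrecv
          · exact hwf.send_not_end _ (htS k hk) hend
    · have initG : ∀ x, G.isStart x → (init G B).col x = Colour.green := fun x hx => if_pos hx
      have initR : ∀ x, ¬ G.isStart x → (init G B).col x = Colour.red := fun x hx => if_neg hx
      refine ⟨initG _ hstM, fun k hk => initG _ (hstS k hk),
        fun _ => initR _ (fun h => hwf.start_not_recv rs h hrs), fun _ k hk =>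
        ⟨initR _ (fun h => hwf.start_not_send _ h (hsvS k hk)),
         initR _ (fun h => hwf.start_not_recv _ h (hqR k hk)),
         initR _ (fun h => hwf.start_not_send _ h (htS k hk))⟩⟩
  obtain ⟨hMg, hSg, hsErs, hredall⟩ := hInv
  have hrsng : (finalSt (init G B) l).col rs ≠ Colour.green := by rw [hyel]; decide
  have hred := hredall hrsng
  have hsEnr : (finalSt (init G B) l).col sE ≠ Colour.red := by
    intro h
    have := hsErs h
    rw [hyel] at this
    cases this
  have ne_tv_sE : ∀ k, k < m → tv k ≠ sE :=
    fun k hk he => hsEnr (by rw [← he]; exact (hred k hk).2.2)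
  -- It suffices to reach a state where all tv k are yellow
  suffices h : ∃ s', Reach G (finalSt (init G B) l) s' ∧
      ∀ k, k < m → s'.col (tv k) = Colour.yellow by
    obtain ⟨s', ⟨l', hl', he⟩, hcols⟩ := h
    refine ⟨l', hl', fun k hk => ?_⟩
    rw [he, hcols k hk]
    decide
  -- Stage A: make sE green
  have stageA : ∃ s2, Reach G (finalSt (init G B) l) s2 ∧ s2.col rs = Colour.yellow ∧
      s2.col sE = Colour.green ∧ s2.col stM = Colour.green ∧
      (∀ k, k < m → s2.col (stS k) = Colour.green) ∧
      (∀ k, k < m → s2.col (sv k) = Colour.red ∧ s2.col (qv k) = Colour.red ∧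
        s2.col (tv k) = Colour.red) := by
    cases hc : (finalSt (init G B) l).col sE with
    | red => exact absurd hc hsEnr
    | green => exact ⟨_, Reach.refl _, hyel, hc, hMg, hSg, hred⟩
    | yellow =>
        refine ⟨_, Reach.single (Step.sendGrn hsEsend hc hsE hyel), ?_, ?_, ?_, ?_, ?_⟩
        · show Function.update _ sE _ rs = _
          have : rs ≠ sE := (neSR hsEsend hrs).symm
          simp [Function.update_apply, this, hyel]
        · exact Function.update_self _ _ _
        · show Function.update _ sE _ stM = _
          have : stM ≠ sE := neStS hstM hsEsend
          simp [Function.update_apply, this, hMg]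
        · intro k hk
          show Function.update _ sE _ (stS k) = _
          have : stS k ≠ sE := neStS (hstS k hk) hsEsend
          simp [Function.update_apply, this, hSg k hk]
        · intro k hk
          have h1 : sv k ≠ sE := ne_sv_sE k hk
          have h2 : qv k ≠ sE := (neSR hsEsend (hqR k hk)).symm
          have h3 : tv k ≠ sE := ne_tv_sE k hk
          refine ⟨?_, ?_, ?_⟩ <;>
            · show Function.update _ sE _ _ = _
              simp [Function.update_apply, h1, h2, h3, (hred k hk).1, (hred k hk).2.1,
                (hred k hk).2.2]
  obtain ⟨s2, hr2, h2rs, h2sE, h2M, h2S, h2red⟩ := stageA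
  -- Stage B: make rs green
  have stageB : ∃ s3, Reach G s2 s3 ∧ s3.col rs = Colour.green ∧
      (∀ k, k < m → s3.col (stS k) = Colour.green) ∧
      (∀ k, k < m → s3.col (sv k) = Colour.red ∧ s3.col (qv k) = Colour.red ∧
        s3.col (tv k) = Colour.red) := by
    refine ⟨_, Reach.single (Step.recvGrn hrs h2rs hpred0 h2M hsE h2sE), ?_, ?_, ?_⟩
    · exact Function.update_self _ _ _
    · intro k hk
      show Function.update _ rs _ (stS k) = _
      have : stS k ≠ rs := neStR (hstS k hk) hrs
      simp [Function.update_apply, this, h2S k hk]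
    · intro k hk
      have h1 : sv k ≠ rs := neSR (hsvS k hk) hrs
      have h2 : qv k ≠ rs := (ne_rs_qv k hk).symm
      have h3 : tv k ≠ rs := neSR (htS k hk) hrs
      refine ⟨?_, ?_, ?_⟩ <;>
        · show Function.update _ rs _ _ = _
          simp [Function.update_apply, h1, h2, h3, (h2red k hk).1, (h2red k hk).2.1,
            (h2red k hk).2.2]
  obtain ⟨s3, hr3, h3rs, h3S, h3red⟩ := stageB
  -- Stage C: colour slave components, one at a time
  have key : ∀ k, k ≤ m → ∃ s', Reach G s3 s' ∧ s'.col rs = Colour.green ∧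
      (∀ j, j < m → s'.col (stS j) = Colour.green) ∧
      (∀ j, j < m → j < k → s'.col (sv j) = Colour.green ∧ s'.col (qv j) = Colour.green ∧
        s'.col (tv j) = Colour.yellow) ∧
      (∀ j, j < m → k ≤ j → s'.col (sv j) = Colour.red ∧ s'.col (qv j) = Colour.red ∧
        s'.col (tv j) = Colour.red) := by
    intro k
    induction k with
    | zero =>
        intro _
        exact ⟨s3, Reach.refl _, h3rs, h3S, fun j _ hj => absurd hj (Nat.not_lt_zero j),
          fun j hj _ => h3red j hj⟩
    | succ k ih =>
        intro hk1
        have hk : k < m := hk1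
        obtain ⟨s, hr, hrs', hS', hdone, hrem⟩ := ih (Nat.le_of_succ_le hk1)
        have hsvred : s.col (sv k) = Colour.red := (hrem k hk (le_refl k)).1
        have hqvred : s.col (qv k) = Colour.red := (hrem k hk (le_refl k)).2.1
        have htvred : s.col (tv k) = Colour.red := (hrem k hk (le_refl k)).2.2
        -- disequalities for this k
        have nqs : qv k ≠ sv k := (neSR (hsvS k hk) (hqR k hk)).symm
        have nts : tv k ≠ sv k := (ne_sv_tv k hk k hk).symm
        have ntq : tv k ≠ qv k := neSR (htS k hk) (hqR k hk)
        have nrs_s : rs ≠ sv k := (neSR (hsvS k hk) hrs).symm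
        have nrs_q : rs ≠ qv k := ne_rs_qv k hk
        have nrs_t : rs ≠ tv k := (neSR (htS k hk) hrs).symm
        have nSts : ∀ j, j < m → stS j ≠ sv k := fun j hj => neStS (hstS j hj) (hsvS k hk)
        have nStq : ∀ j, j < m → stS j ≠ qv k := fun j hj => neStR (hstS j hj) (hqR k hk)
        have nStt : ∀ j, j < m → stS j ≠ tv k := fun j hj => neStS (hstS j hj) (htS k hk)
        -- the predecessor of sv k is green
        have hpredsv : ∃ u, G.pred u (sv k) ∧ s.col u = Colour.green := by
          cases k with
          | zero => exact ⟨rs, hm0 hk, hrs'⟩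
          | succ j =>
              exact ⟨sv j, hchain j hk,
                (hdone j (Nat.lt_of_succ_lt hk) (Nat.lt_succ_self j)).1⟩
        obtain ⟨u, hu, hug⟩ := hpredsv
        -- five steps
        have step1 : Step G Rule.sendYel s
            ⟨Function.update s.col (sv k) Colour.yellow, s.tok, s.pool⟩ :=
          Step.sendYel (hsvS k hk) hsvred hu hug
        have step2 : Step G Rule.recvYel
            (⟨Function.update s.col (sv k) Colour.yellow, s.tok, s.pool⟩ : St V)
            ⟨Function.update (Function.update s.col (sv k) Colour.yellow) (qv k) Colour.yellow,
              s.tok, s.pool⟩ := by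
          refine Step.recvYel (hqR k hk) ?_ (hmat k hk) ?_ (hpq k hk) ?_
          · show Function.update _ _ _ _ = _
            simp [Function.update_apply, nqs, hqvred]
          · exact Function.update_self _ _ _
          · show Function.update _ _ _ _ = _
            simp [Function.update_apply, nSts k hk, hS' k hk]
        have step3 : Step G Rule.sendGrn
            (⟨Function.update (Function.update s.col (sv k) Colour.yellow) (qv k) Colour.yellow,
              s.tok, s.pool⟩ : St V)
            ⟨Function.update (Function.update (Function.update s.col (sv k) Colour.yellow)
              (qv k) Colour.yellow) (sv k) Colour.green, s.tok, s.pool⟩ := by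
          refine Step.sendGrn (hsvS k hk) ?_ (hmat k hk) ?_
          · show Function.update _ _ _ _ = _
            simp [Function.update_apply, nqs.symm]
          · exact Function.update_self _ _ _
        have step4 : Step G Rule.recvGrn
            (⟨Function.update (Function.update (Function.update s.col (sv k) Colour.yellow)
              (qv k) Colour.yellow) (sv k) Colour.green, s.tok, s.pool⟩ : St V)
            ⟨Function.update (Function.update (Function.update (Function.update s.col (sv k)
              Colour.yellow) (qv k) Colour.yellow) (sv k) Colour.green) (qv k) Colour.green,
              Function.update s.tok (qv k) false,
              if s.tok (qv k) then
                Function.update s.pool (G.comp (qv k)) (s.pool (G.comp (qv k)) + 1)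
              else s.pool⟩ := by
          refine Step.recvGrn (hqR k hk) ?_ (hpq k hk) ?_ (hmat k hk) ?_
          · show Function.update _ _ _ _ = _
            simp [Function.update_apply, nqs]
          · show Function.update _ _ _ _ = _
            simp [Function.update_apply, nSts k hk, nStq k hk, hS' k hk]
          · exact Function.update_self _ _ _
        have step5 : Step G Rule.sendYel
            (⟨Function.update (Function.update (Function.update (Function.update s.col (sv k)
              Colour.yellow) (qv k) Colour.yellow) (sv k) Colour.green) (qv k) Colour.green,
              Function.update s.tok (qv k) false,
              if s.tok (qv k) then
                Function.update s.pool (G.comp (qv k)) (s.pool (G.comp (qv k)) + 1)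
              else s.pool⟩ : St V)
            ⟨Function.update (Function.update (Function.update (Function.update
              (Function.update s.col (sv k) Colour.yellow) (qv k) Colour.yellow)
              (sv k) Colour.green) (qv k) Colour.green) (tv k) Colour.yellow,
              Function.update s.tok (qv k) false,
              if s.tok (qv k) then
                Function.update s.pool (G.comp (qv k)) (s.pool (G.comp (qv k)) + 1)
              else s.pool⟩ := by
          refine Step.sendYel (htS k hk) ?_ (hqt k hk) ?_
          · show Function.update _ _ _ _ = _
            simp [Function.update_apply, ntq, nts, htvred]
          · exact Function.update_self _ _ _
        refine ⟨_, hr.trans ((Reach.single step1).trans ((Reach.single step2).trans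
          ((Reach.single step3).trans ((Reach.single step4).trans
          (Reach.single step5))))), ?_, ?_, ?_, ?_⟩
        · show Function.update _ _ _ rs = _
          simp [Function.update_apply, nrs_t, nrs_q, nrs_s, hrs']
        · intro j hj
          show Function.update _ _ _ (stS j) = _
          simp [Function.update_apply, nStt j hj, nStq j hj, nSts j hj, hS' j hj]
        · intro j hj hjk
          rcases Nat.lt_succ_iff_lt_or_eq.mp hjk with hjk' | rfl
          · have n1 : sv j ≠ sv k := fun he => absurd (hsvinj j hj k hk he) (Nat.ne_of_lt hjk')
            have n2 : qv j ≠ qv k := fun he => absurd (hqvinj j hj k hk he) (Nat.ne_of_lt hjk')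
            have n3 : tv j ≠ tv k := fun he => absurd (htvinj j hj k hk he) (Nat.ne_of_lt hjk')
            have n4 : sv j ≠ qv k := neSR (hsvS j hj) (hqR k hk)
            have n5 : sv j ≠ tv k := ne_sv_tv j hj k hk
            have n6 : qv j ≠ sv k := (neSR (hsvS k hk) (hqR j hj)).symm
            have n7 : qv j ≠ tv k := (neSR (htS k hk) (hqR j hj)).symm
            have n8 : tv j ≠ sv k := (ne_sv_tv k hk j hj).symm
            have n9 : tv j ≠ qv k := neSR (htS j hj) (hqR k hk)
            obtain ⟨d1, d2, d3⟩ := hdone j hj hjk'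
            refine ⟨?_, ?_, ?_⟩ <;>
              · show Function.update _ _ _ _ = _
                simp [Function.update_apply, n1, n2, n3, n4, n5, n6, n7, n8, n9, d1, d2, d3]
          · refine ⟨?_, ?_, ?_⟩
            · show Function.update _ _ _ (sv j) = _
              simp [Function.update_apply, nts.symm, nqs.symm]
            · show Function.update _ _ _ (qv j) = _
              simp [Function.update_apply, ntq.symm]
            · exact Function.update_self _ _ _
        · intro j hj hjk
          have hjk' : k < j := hjk
          have n1 : sv j ≠ sv k := fun he => absurd (hsvinj j hj k hk he) (Nat.ne_of_gt hjk')
          have n2 : qv j ≠ qv k := fun he => absurd (hqvinj j hj k hk he) (Nat.ne_of_gt hjk')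
          have n3 : tv j ≠ tv k := fun he => absurd (htvinj j hj k hk he) (Nat.ne_of_gt hjk')
          have n4 : sv j ≠ qv k := neSR (hsvS j hj) (hqR k hk)
          have n5 : sv j ≠ tv k := ne_sv_tv j hj k hk
          have n6 : qv j ≠ sv k := (neSR (hsvS k hk) (hqR j hj)).symm
          have n7 : qv j ≠ tv k := (neSR (htS k hk) (hqR j hj)).symm
          have n8 : tv j ≠ sv k := (ne_sv_tv k hk j hj).symm
          have n9 : tv j ≠ qv k := neSR (htS j hj) (hqR k hk)
          obtain ⟨d1, d2, d3⟩ := hrem j hj (Nat.le_of_lt hjk')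
          refine ⟨?_, ?_, ?_⟩ <;>
            · show Function.update _ _ _ _ = _
              simp [Function.update_apply, n1, n2, n3, n4, n5, n6, n7, n8, n9, d1, d2, d3]
  obtain ⟨s', hr', _, _, hdone, _⟩ := key m (le_refl m)
  exact ⟨s', hr2.trans (hr3.trans hr'), fun k hk => (hdone k hk hk).2.2⟩
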